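/- For N×N symmetric ℤ₂-matrices A and B with N = 2^k, the quantum disparity 1 − |⟨0|^{⊗(2k+1)} B̂ Â |0⟩^{⊗(2k+1)}| equals the normalized classical Frobenius distance (1/N²)·∑_{i,j}(A_{ij} − B_{ij})², where Â, B̂ are the log-Hadamard representations. -/

import Mathlib

open Matrix Kronecker

/-- Vertices of a graph with N = 2^k nodes, encoded as bitstrings of k qubits. -/
abbrev Vtx (k : ℕ) := Fin k → Fin 2

/-- The 2×2 Hadamard matrix. -/
noncomputable def H2 : Matrix (Fin 2) (Fin 2) ℂ :=
  ((Real.sqrt 2 : ℂ))⁻¹ • !![1, 1; 1, -1]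

/-- h(A) = iπ·∑_{i,j} A_{ij} |i,j⟩⟨i,j|. -/
noncomputable def hmat {k : ℕ} (A : Matrix (Vtx k) (Vtx k) (ZMod 2)) :
    Matrix (Vtx k × Vtx k) (Vtx k × Vtx k) ℂ :=
  Matrix.diagonal fun p => Complex.I * (Real.pi : ℂ) * ((A p.1 p.2).val : ℂ)

/-- cexp(K) = I ⊕ exp(K) = |0⟩⟨0|⊗I + |1⟩⟨1|⊗exp(K). -/
noncomputable def cexpM {k : ℕ} (K : Matrix (Vtx k × Vtx k) (Vtx k × Vtx k) ℂ) :
    Matrix (Fin 2 × (Vtx k × Vtx k)) (Fin 2 × (Vtx k × Vtx k)) ℂ :=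
  (Matrix.single 0 0 1) ⊗ₖ (1 : Matrix (Vtx k × Vtx k) (Vtx k × Vtx k) ℂ)
    + (Matrix.single 1 1 1) ⊗ₖ NormedSpace.exp K

/-- The Hadamard transform H^{⊗(2k+1)} on the (2k+1)-qubit space
ℂ² ⊗ (ℂ^{2^k} ⊗ ℂ^{2^k}), given by its entrywise tensor-power formula. -/
noncomputable def Hfull (k : ℕ) :
    Matrix (Fin 2 × (Vtx k × Vtx k)) (Fin 2 × (Vtx k × Vtx k)) ℂ :=
  Matrix.of fun p q =>
    H2 p.1 q.1 * (∏ t, H2 (p.2.1 t) (q.2.1 t)) * ∏ t, H2 (p.2.2 t) (q.2.2 t)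

/-- The log-Hadamard representation Â = H^{⊗(2k+1)}·cexp(h(A))·H^{⊗(2k+1)}. -/
noncomputable def hatRep {k : ℕ} (A : Matrix (Vtx k) (Vtx k) (ZMod 2)) :
    Matrix (Fin 2 × (Vtx k × Vtx k)) (Fin 2 × (Vtx k × Vtx k)) ℂ :=
  Hfull k * cexpM (hmat A) * Hfull k

/-- The all-zeros basis state |0⟩^{⊗(2k+1)}. -/
noncomputable def e0 (k : ℕ) : Fin 2 × (Vtx k × Vtx k) → ℂ :=
  fun p => if p = (0, (fun _ => 0, fun _ => 0)) then 1 else 0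

lemma sqrt2C : ((Real.sqrt 2 : ℝ) : ℂ) * ((Real.sqrt 2 : ℝ) : ℂ) = 2 := by
  norm_cast
  rw [Real.mul_self_sqrt] <;> norm_num

lemma H2_orth (a b : Fin 2) : ∑ x : Fin 2, H2 a x * H2 x b = if a = b then 1 else 0 := by
  have hinv : ((Real.sqrt 2 : ℝ) : ℂ)⁻¹ * ((Real.sqrt 2 : ℝ) : ℂ)⁻¹ = 2⁻¹ := by
    rw [← mul_inv, sqrt2C]
  fin_cases a <;> fin_cases b <;>
    simp [H2, Fin.sum_univ_two, Matrix.smul_apply]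
  all_goals linear_combination 2 * hinv

lemma H2_zero_left (x : Fin 2) : H2 0 x = ((Real.sqrt 2 : ℝ) : ℂ)⁻¹ := by
  fin_cases x <;> simp [H2]

lemma H2_zero_right (x : Fin 2) : H2 x 0 = ((Real.sqrt 2 : ℝ) : ℂ)⁻¹ := by
  fin_cases x <;> simp [H2]

lemma prod_delta {k : ℕ} (f g : Vtx k) :
    (∏ t, if f t = g t then (1:ℂ) else 0) = if f = g then 1 else 0 := by
  by_cases h : f = g
  · simp [h]
  · obtain ⟨t, ht⟩ := Function.ne_iff.mp h
    rw [if_neg h]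
    exact Finset.prod_eq_zero (Finset.mem_univ t) (by simp [ht])

lemma sum_prod_fun {k : ℕ} (F : Fin k → Fin 2 → ℂ) :
    ∑ g : Vtx k, ∏ t, F t (g t) = ∏ t, ∑ x, F t x :=
  (Fintype.prod_sum _).symm

lemma Hfull_sq (k : ℕ) : Hfull k * Hfull k = 1 := by
  ext p q
  rw [Matrix.mul_apply]
  have hterm : ∀ r : Fin 2 × (Vtx k × Vtx k),
      Hfull k p r * Hfull k r q =
        (H2 p.1 r.1 * H2 r.1 q.1) *
          ((∏ t, H2 (p.2.1 t) (r.2.1 t) * H2 (r.2.1 t) (q.2.1 t)) *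
           (∏ t, H2 (p.2.2 t) (r.2.2 t) * H2 (r.2.2 t) (q.2.2 t))) := by
    intro r
    simp only [Hfull, Matrix.of_apply, Finset.prod_mul_distrib]
    ring
  simp_rw [hterm]
  rw [Fintype.sum_prod_type]
  simp_rw [← Finset.mul_sum, Fintype.sum_prod_type, ← Finset.sum_mul, ← Finset.mul_sum]
  simp_rw [← Finset.sum_mul]
  rw [sum_prod_fun (fun t y => H2 (p.2.1 t) y * H2 y (q.2.1 t)),
    sum_prod_fun (fun t y => H2 (p.2.2 t) y * H2 y (q.2.2 t))]
  simp_rw [H2_orth, prod_delta]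
  by_cases h1 : p.1 = q.1 <;> by_cases h2 : p.2.1 = q.2.1 <;> by_cases h3 : p.2.2 = q.2.2 <;>
    simp [Matrix.one_apply, Prod.ext_iff, h1, h2, h3]

lemma exp_hmat {k : ℕ} (A : Matrix (Vtx k) (Vtx k) (ZMod 2)) :
    NormedSpace.exp (hmat A) =
      Matrix.diagonal (fun p => 1 - 2 * ((A p.1 p.2).val : ℂ)) := by
  rw [hmat, Matrix.exp_diagonal]
  have hfun : (NormedSpace.exp fun p : Vtx k × Vtx k =>
      Complex.I * (Real.pi : ℂ) * ((A p.1 p.2).val : ℂ)) =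
      fun p => 1 - 2 * ((A p.1 p.2).val : ℂ) := by
    funext p
    rw [Pi.coe_exp, ← Complex.exp_eq_exp_ℂ]
    have hlt : (A p.1 p.2).val < 2 := ZMod.val_lt _
    rcases (by omega : (A p.1 p.2).val = 0 ∨ (A p.1 p.2).val = 1) with h | h <;> rw [h]
    · norm_num
    · push_cast
      rw [mul_one, mul_comm, Complex.exp_pi_mul_I]
      norm_num
  rw [hfun]

lemma cexp_mul {k : ℕ} (A B : Matrix (Vtx k) (Vtx k) (ZMod 2)) :
    cexpM (hmat B) * cexpM (hmat A) =
      (Matrix.single 0 0 1) ⊗ₖ (1 : Matrix (Vtx k × Vtx k) (Vtx k × Vtx k) ℂ)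
        + (Matrix.single 1 1 1) ⊗ₖ
            Matrix.diagonal (fun p =>
              (1 - 2 * ((B p.1 p.2).val : ℂ)) * (1 - 2 * ((A p.1 p.2).val : ℂ))) := by
  rw [cexpM, cexpM, exp_hmat, exp_hmat, add_mul, mul_add, mul_add,
    ← Matrix.mul_kronecker_mul, ← Matrix.mul_kronecker_mul, ← Matrix.mul_kronecker_mul,
    ← Matrix.mul_kronecker_mul]
  rw [Matrix.single_mul_single_same, Matrix.single_mul_single_same,
    Matrix.single_mul_single_of_ne (h := (by decide : (0:Fin 2) ≠ 1)),
    Matrix.single_mul_single_of_ne (h := (by decide : (1:Fin 2) ≠ 0)),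
    Matrix.zero_kronecker, Matrix.zero_kronecker, Matrix.one_mul, mul_one,
    Matrix.diagonal_mul_diagonal]
  abel

lemma e0_inner {k : ℕ} (M : Matrix (Fin 2 × (Vtx k × Vtx k)) (Fin 2 × (Vtx k × Vtx k)) ℂ) :
    (star (e0 k)) ⬝ᵥ (M *ᵥ e0 k) =
      M (0, (fun _ => 0, fun _ => 0)) (0, (fun _ => 0, fun _ => 0)) := by
  simp [dotProduct, Matrix.mulVec, e0, apply_ite (star : ℂ → ℂ), mul_ite, ite_mul,
    Finset.sum_ite_eq']

lemma sum_sum_kron {k : ℕ} (X : Matrix (Fin 2) (Fin 2) ℂ)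
    (Y : Matrix (Vtx k × Vtx k) (Vtx k × Vtx k) ℂ) :
    ∑ p : Fin 2 × (Vtx k × Vtx k), ∑ q : Fin 2 × (Vtx k × Vtx k), (X ⊗ₖ Y) p q =
      (∑ i, ∑ j, X i j) * (∑ x, ∑ y, Y x y) := by
  simp_rw [Fintype.sum_prod_type, Matrix.kroneckerMap_apply]
  simp_rw [← Finset.mul_sum, ← Finset.sum_mul, ← Finset.mul_sum, ← Finset.sum_mul]

lemma sum_std (a : Fin 2) :
    ∑ i : Fin 2, ∑ j : Fin 2, Matrix.single a a (1:ℂ) i j = 1 := by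
  fin_cases a <;> simp [Matrix.single, Fin.sum_univ_two] <;> decide

lemma sum_diag {k : ℕ} (d : (Vtx k × Vtx k) → ℂ) :
    ∑ x : Vtx k × Vtx k, ∑ y : Vtx k × Vtx k, Matrix.diagonal d x y = ∑ x, d x := by
  apply Finset.sum_congr rfl
  intro x _
  simp [Matrix.diagonal_apply, Finset.sum_ite_eq]

lemma sum_one {k : ℕ} :
    ∑ x : Vtx k × Vtx k, ∑ y : Vtx k × Vtx k, (1 : Matrix (Vtx k × Vtx k) (Vtx k × Vtx k) ℂ) x y
      = (2:ℂ) ^ (2 * k) := by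
  rw [← Matrix.diagonal_one, sum_diag, Finset.sum_const, Finset.card_univ]
  simp only [Fintype.card_prod, Fintype.card_pi, Fintype.card_fin, Finset.prod_const,
    Finset.card_univ, nsmul_eq_mul, mul_one]
  push_cast
  ring

lemma c2 : ((Real.sqrt 2 : ℝ) : ℂ)⁻¹ * ((Real.sqrt 2 : ℝ) : ℂ)⁻¹ = 2⁻¹ := by
  rw [← mul_inv, sqrt2C]


/-- The quantum disparity 1 − |⟨0|^{⊗(2k+1)} B̂ Â |0⟩^{⊗(2k+1)}| equals the normalized
classical Frobenius distance (1/N²)·∑_{i,j}(A_{ij} − B_{ij})², N = 2^k. -/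
theorem stmt_15 {k : ℕ} (A B : Matrix (Vtx k) (Vtx k) (ZMod 2))
    (hA : A.IsSymm) (hB : B.IsSymm) :
    1 - ‖(star (e0 k)) ⬝ᵥ ((hatRep B * hatRep A) *ᵥ e0 k)‖ =
      (1 / ((2 : ℝ) ^ k) ^ 2) *
        ∑ i : Vtx k, ∑ j : Vtx k, (((A i j).val : ℝ) - ((B i j).val : ℝ)) ^ 2 := by
  set S : ℝ := ∑ i : Vtx k, ∑ j : Vtx k, (((A i j).val : ℝ) - ((B i j).val : ℝ)) ^ 2 with hS
  set N2 : ℝ := ((2:ℝ)^k)^2 with hN2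
  have hM : hatRep B * hatRep A =
      Hfull k * ((cexpM (hmat B) * cexpM (hmat A)) * Hfull k) := by
    rw [hatRep, hatRep]
    simp only [Matrix.mul_assoc]
    rw [← Matrix.mul_assoc (Hfull k) (Hfull k) (cexpM (hmat A) * Hfull k), Hfull_sq,
      Matrix.one_mul]
  rw [hM, e0_inner]
  set z : Fin 2 × (Vtx k × Vtx k) := (0, (fun _ => 0, fun _ => 0)) with hz
  set c : ℂ := ((Real.sqrt 2 : ℝ) : ℂ)⁻¹ with hc
  have hHz_left : ∀ p, Hfull k z p = c * c ^ k * c ^ k := by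
    intro p
    simp [Hfull, hz, H2_zero_left, Finset.prod_const, Finset.card_univ, hc]
  have hHz_right : ∀ p, Hfull k p z = c * c ^ k * c ^ k := by
    intro p
    simp [Hfull, hz, H2_zero_right, Finset.prod_const, Finset.card_univ, hc]
  set Cm := cexpM (hmat B) * cexpM (hmat A) with hCm
  have hentry : (Hfull k * (Cm * Hfull k)) z z =
      (c * c ^ k * c ^ k) * (c * c ^ k * c ^ k) * ∑ p, ∑ q, Cm p q := by
    rw [Matrix.mul_apply]
    have h1 : ∀ p, (Cm * Hfull k) p z = (∑ q, Cm p q) * (c * c ^ k * c ^ k) := by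
      intro p
      rw [Matrix.mul_apply]
      simp_rw [hHz_right]
      rw [Finset.sum_mul]
    simp_rw [h1, hHz_left]
    have h2 : ∀ x : Fin 2 × (Vtx k × Vtx k),
        c * c ^ k * c ^ k * ((∑ q, Cm x q) * (c * c ^ k * c ^ k)) =
          c * c ^ k * c ^ k * (c * c ^ k * c ^ k) * ∑ q, Cm x q := fun x => by ring
    simp_rw [h2, ← Finset.mul_sum]
  have hsum : ∑ p, ∑ q, Cm p q =
      (2:ℂ)^(2*k) + ∑ x : Vtx k × Vtx k,
        (1 - 2 * ((B x.1 x.2).val : ℂ)) * (1 - 2 * ((A x.1 x.2).val : ℂ)) := by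
    rw [hCm, cexp_mul]
    simp_rw [Matrix.add_apply, Finset.sum_add_distrib]
    rw [sum_sum_kron, sum_sum_kron, sum_std, sum_std, sum_one, sum_diag]
    ring
  have hterm : ∀ i j : Vtx k,
      (1 - 2 * ((B i j).val : ℂ)) * (1 - 2 * ((A i j).val : ℂ)) =
        (((1:ℝ) - 2 * (((A i j).val : ℝ) - ((B i j).val : ℝ)) ^ 2 : ℝ) : ℂ) := by
    intro i j
    have h1 := ZMod.val_lt (A i j)
    have h2 := ZMod.val_lt (B i j)
    rcases (by omega : (A i j).val = 0 ∨ (A i j).val = 1) with ha | ha <;>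
      rcases (by omega : (B i j).val = 0 ∨ (B i j).val = 1) with hb | hb <;>
      rw [ha, hb] <;> push_cast <;> norm_num
  have hptR : ∑ i : Vtx k, ∑ j : Vtx k,
      ((1:ℝ) - 2 * (((A i j).val : ℝ) - ((B i j).val : ℝ)) ^ 2) = 2^(2*k) - 2 * S := by
    rw [hS]
    simp only [Finset.sum_sub_distrib, Finset.sum_const, Finset.card_univ, Fintype.card_pi,
      Fintype.card_fin, Finset.prod_const, nsmul_eq_mul, mul_one, ← Finset.mul_sum]
    push_cast
    ring
  have hpt : ∑ x : Vtx k × Vtx k,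
        (1 - 2 * ((B x.1 x.2).val : ℂ)) * (1 - 2 * ((A x.1 x.2).val : ℂ))
      = (2:ℂ)^(2*k) - 2 * (S:ℂ) := by
    rw [Fintype.sum_prod_type]
    simp_rw [hterm]
    rw [show ∑ i : Vtx k, ∑ j : Vtx k,
        (((1:ℝ) - 2 * (((A i j).val : ℝ) - ((B i j).val : ℝ)) ^ 2 : ℝ) : ℂ) =
        ((∑ i : Vtx k, ∑ j : Vtx k,
          ((1:ℝ) - 2 * (((A i j).val : ℝ) - ((B i j).val : ℝ)) ^ 2) : ℝ) : ℂ) by push_cast; rfl]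
    rw [hptR]
    push_cast
    ring
  have hP : (2:ℂ)^k ≠ 0 := pow_ne_zero _ two_ne_zero
  have hval : (Hfull k * (Cm * Hfull k)) z z = (((1:ℝ) - (1/N2) * S : ℝ) : ℂ) := by
    rw [hentry, hsum, hpt]
    have hcc : (c * c ^ k * c ^ k) * (c * c ^ k * c ^ k) = ((2:ℂ)⁻¹) ^ (2*k+1) := by
      rw [show (c * c ^ k * c ^ k) * (c * c ^ k * c ^ k) = (c*c) ^ (2*k+1) by ring, hc, c2]
    rw [hcc, hN2]
    have h2k : ((2:ℂ))^(2*k) = ((2:ℂ)^k)^2 := by rw [mul_comm, pow_mul]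
    push_cast
    rw [h2k]
    field_simp
    have hx : ((1:ℂ) / 2) ^ (k * 2) * 2 ^ (k * 2) = 1 := by rw [← mul_pow]; norm_num
    linear_combination (2 ^ (k * 2) - (S:ℂ)) * hx
  rw [hval, Complex.norm_real, Real.norm_eq_abs]
  have hS0 : 0 ≤ S := Finset.sum_nonneg fun i _ => Finset.sum_nonneg fun j _ => sq_nonneg _
  have hSle : S ≤ N2 := by
    rw [hS, hN2]
    calc ∑ i : Vtx k, ∑ j : Vtx k, (((A i j).val : ℝ) - ((B i j).val : ℝ)) ^ 2
        ≤ ∑ _i : Vtx k, ∑ _j : Vtx k, (1:ℝ) := by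
          apply Finset.sum_le_sum
          intro i _
          apply Finset.sum_le_sum
          intro j _
          have h1 := ZMod.val_lt (A i j)
          have h2 := ZMod.val_lt (B i j)
          rcases (by omega : (A i j).val = 0 ∨ (A i j).val = 1) with ha | ha <;>
            rcases (by omega : (B i j).val = 0 ∨ (B i j).val = 1) with hb | hb <;>
            rw [ha, hb] <;> norm_num
      _ = ((2:ℝ)^k)^2 := by
          simp only [Finset.sum_const, Finset.card_univ, Fintype.card_pi, Fintype.card_fin,
            Finset.prod_const, nsmul_eq_mul, mul_one]
          push_cast
          ring
  have hN2pos : (0:ℝ) < N2 := by positivity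
  have hle1 : (1/N2) * S ≤ 1 := by
    rw [div_mul_eq_mul_div, one_mul, div_le_one hN2pos]
    exact hSle
  rw [abs_of_nonneg (by linarith)]
  ring
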